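/- arXiv:0905.1528 — 5 statements merged into one kernel-verified Lean document; each statement's English description precedes it below -/
import Mathlib

section
/- Every spindle-convex subset of ℝ³ is strictly convex: if S is spindle-convex, a, b ∈ S with a ≠ b, and y lies in the relative interior of the segment [a,b], then y is in the interior of S relative to the affine hull context, i.e., any point strictly between a and b is a non-extreme point contained in S together with a neighborhood in the spindle sp(a,b). -/
open scoped InnerProductSpace
open Metric

noncomputable section

abbrev E3 : Type := EuclideanSpace ℝ (Fin 3)

/-- `S` is spindle-convex: for any two distinct points `a b ∈ S` and any circle of
radius `r ≥ 1` (center `c`, lying in the plane through `c` with normal `n`) passing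
through `a` and `b`, every point of the (closed) short circular arc with endpoints
`a, b` belongs to `S`.  The short arc is cut off by a hyperplane through the chord
`[a,b]` with in-plane direction `u` pointing towards the short side (`0 ≤ ⟪a-c,u⟫`). -/
def SpindleConvex (S : Set E3) : Prop :=
  ∀ a ∈ S, ∀ b ∈ S, a ≠ b →
    ∀ (c n u : E3) (r : ℝ), 1 ≤ r →
      ‖a - c‖ = r → ‖b - c‖ = r →
      n ≠ 0 → ⟪a - c, n⟫_ℝ = 0 → ⟪b - c, n⟫_ℝ = 0 →
      u ≠ 0 → ⟪u, n⟫_ℝ = 0 → ⟪a - c, u⟫_ℝ = ⟪b - c, u⟫_ℝ → 0 ≤ ⟪a - c, u⟫_ℝ →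
      ∀ p : E3, ‖p - c‖ = r → ⟪p - c, n⟫_ℝ = 0 → ⟪a - c, u⟫_ℝ ≤ ⟪p - c, u⟫_ℝ → p ∈ S

lemma norm_eq_of_sq {v : E3} {r : ℝ} (hr : 0 ≤ r) (h : ‖v‖^2 = r^2) : ‖v‖ = r := by
  have h2 := Real.sqrt_sq (norm_nonneg v)
  rw [← h2, h, Real.sqrt_sq hr]

lemma norm_comb (e w : E3) (he : ‖e‖ = 1) (hw : ‖w‖ = 1) (hew : ⟪e,w⟫_ℝ = 0)
    (α β : ℝ) : ‖α•e + β•w‖^2 = α^2 + β^2 := by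
  rw [norm_add_sq_real, norm_smul, norm_smul, real_inner_smul_left, real_inner_smul_right, hew,
    he, hw]
  simp [mul_pow, sq_abs]

lemma arc_mem (S : Set E3) (h : SpindleConvex S) {p q : E3} (hp : p ∈ S) (hq : q ∈ S)
    (hpq : p ≠ q) {e w n : E3} (he : ‖e‖ = 1) (hw : ‖w‖ = 1) (hew : ⟪e,w⟫_ℝ = 0)
    (hn0 : n ≠ 0) (hen : ⟪e,n⟫_ℝ = 0) (hwn : ⟪w,n⟫_ℝ = 0)
    (heqp : q - p = ‖q - p‖ • e) (ξ η : ℝ) (hη : 0 < η)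
    (hcond : ξ^2 + η^2 + 2*η ≤ ‖q - p‖^2/4) :
    (2:ℝ)⁻¹ • (p + q) + ξ • e + η • w ∈ S := by
  set d : ℝ := ‖q - p‖ with hd
  have hd0 : 0 < d := by
    rw [hd, norm_pos_iff, sub_ne_zero]; exact hpq.symm
  set h0 : ℝ := (d^2/4 - ξ^2 - η^2)/(2*η) with hh0
  have hh1 : 1 ≤ h0 := by
    rw [hh0, le_div_iff₀ (by linarith)]
    nlinarith
  set c : E3 := (2:ℝ)⁻¹ • (p + q) - h0 • w with hc
  set r : ℝ := Real.sqrt (h0^2 + d^2/4) with hr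
  have hrsq : r^2 = h0^2 + d^2/4 := Real.sq_sqrt (by positivity)
  have hr1 : 1 ≤ r := by
    nlinarith [Real.sqrt_nonneg (h0^2 + d^2/4)]
  have hr0 : 0 ≤ r := by linarith
  -- vector identities
  have hpc : p - c = (-(d/2)) • e + h0 • w := by
    rw [hc]
    have h1 : p - ((2:ℝ)⁻¹ • (p + q) - h0 • w) = (-(2:ℝ)⁻¹) • (q - p) + h0 • w := by module
    rw [h1, heqp, smul_smul]
    module
  have hqc : q - c = (d/2) • e + h0 • w := by
    rw [hc]
    have h1 : q - ((2:ℝ)⁻¹ • (p + q) - h0 • w) = ((2:ℝ)⁻¹) • (q - p) + h0 • w := by module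
    rw [h1, heqp, smul_smul]
    module
  set x : E3 := (2:ℝ)⁻¹ • (p + q) + ξ • e + η • w with hx
  have hxc : x - c = ξ • e + (η + h0) • w := by
    rw [hx, hc]; module
  have hww : ⟪w, w⟫_ℝ = 1 := by
    rw [real_inner_self_eq_norm_mul_norm, hw]; norm_num
  -- norms
  have hnpc : ‖p - c‖ = r := by
    refine norm_eq_of_sq hr0 ?_
    rw [hpc, norm_comb e w he hw hew, hrsq]; ring
  have hnqc : ‖q - c‖ = r := by
    refine norm_eq_of_sq hr0 ?_
    rw [hqc, norm_comb e w he hw hew, hrsq]; ring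
  have hnxc : ‖x - c‖ = r := by
    refine norm_eq_of_sq hr0 ?_
    rw [hxc, norm_comb e w he hw hew, hrsq]
    have : 2 * η * h0 = d^2/4 - ξ^2 - η^2 := by
      rw [hh0]; field_simp
    linear_combination this
  -- inner products
  have hin : ∀ α β : ℝ, ⟪α • e + β • w, n⟫_ℝ = 0 := by
    intro α β
    rw [inner_add_left, real_inner_smul_left, real_inner_smul_left, hen, hwn]; ring
  have hiw : ∀ α β : ℝ, ⟪α • e + β • w, w⟫_ℝ = β := by
    intro α β
    rw [inner_add_left, real_inner_smul_left, real_inner_smul_left, hew, hww]; ring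
  have hw0 : w ≠ 0 := by
    intro h0'; rw [h0'] at hw; simp at hw
  refine h p hp q hq hpq c n w r hr1 hnpc hnqc hn0 ?_ ?_ hw0 hwn ?_ ?_ x hnxc ?_ ?_
  · rw [hpc]; exact hin _ _
  · rw [hqc]; exact hin _ _
  · rw [hpc, hqc, hiw, hiw]
  · rw [hpc, hiw]; linarith
  · rw [hxc]; exact hin _ _
  · rw [hpc, hxc, hiw, hiw]; linarith

lemma axis_mem (S : Set E3) (h : SpindleConvex S) {x : E3} {e w n : E3}
    (he : ‖e‖ = 1) (hw : ‖w‖ = 1) (hew : ⟪e,w⟫_ℝ = 0)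
    (hn0 : n ≠ 0) (hen : ⟪e,n⟫_ℝ = 0) (hwn : ⟪w,n⟫_ℝ = 0)
    (L ε : ℝ) (hε : 0 < ε) (hεL : ε ≤ L) (hk : 2*ε ≤ L^2 + ε^2)
    (hp : x + L • e + ε • w ∈ S) (hq : x - L • e + ε • w ∈ S) : x ∈ S := by
  set k : ℝ := (L^2 + ε^2)/(2*ε) with hkdef
  have hL0 : 0 < L := lt_of_lt_of_le hε hεL
  have hk1 : 1 ≤ k := by
    rw [hkdef, le_div_iff₀ (by linarith)]; linarith
  have hkε : ε ≤ k := by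
    rw [hkdef, le_div_iff₀ (by linarith)]; nlinarith
  set c : E3 := x + k • w with hc
  set p' : E3 := x + L • e + ε • w with hp'
  set q' : E3 := x - L • e + ε • w with hq'
  have he0 : e ≠ 0 := by intro h0'; rw [h0'] at he; simp at he
  have hw0 : w ≠ 0 := by intro h0'; rw [h0'] at hw; simp at hw
  have hne : p' ≠ q' := by
    intro hEq
    have : (2*L) • e = 0 := by
      have h2 : p' - q' = (2*L) • e := by rw [hp', hq']; module
      rw [hEq] at h2; rw [← h2]; simp
    rcases smul_eq_zero.mp this with h1 | h1
    · nlinarith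
    · exact he0 h1
  have hpc : p' - c = L • e + (ε - k) • w := by rw [hp', hc]; module
  have hqc : q' - c = (-L) • e + (ε - k) • w := by rw [hq', hc]; module
  have hxc : x - c = (0:ℝ) • e + (-k) • w := by rw [hc]; module
  have hww : ⟪w, w⟫_ℝ = 1 := by
    rw [real_inner_self_eq_norm_mul_norm, hw]; norm_num
  have hk0 : 0 ≤ k := by linarith
  have hksq : L^2 + (ε - k)^2 = k^2 := by
    have h2 : 2*ε*k = L^2 + ε^2 := by rw [hkdef]; field_simp
    linear_combination -h2
  have hin : ∀ α β : ℝ, ⟪α • e + β • w, n⟫_ℝ = 0 := by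
    intro α β
    rw [inner_add_left, real_inner_smul_left, real_inner_smul_left, hen, hwn]; ring
  have hiw : ∀ α β : ℝ, ⟪α • e + β • w, -w⟫_ℝ = -β := by
    intro α β
    rw [inner_neg_right, inner_add_left, real_inner_smul_left, real_inner_smul_left, hew, hww]
    ring
  have hnpc : ‖p' - c‖ = k := by
    refine norm_eq_of_sq hk0 ?_
    rw [hpc, norm_comb e w he hw hew]; linear_combination hksq
  have hnqc : ‖q' - c‖ = k := by
    refine norm_eq_of_sq hk0 ?_
    rw [hqc, norm_comb e w he hw hew]; linear_combination hksq
  have hnxc : ‖x - c‖ = k := by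
    refine norm_eq_of_sq hk0 ?_
    rw [hxc, norm_comb e w he hw hew]; ring
  have hwneg : (-w : E3) ≠ 0 := by simpa using hw0
  have hwnn : ⟪-w, n⟫_ℝ = 0 := by rw [inner_neg_left, hwn]; ring
  refine h p' hp q' hq hne c n (-w) k hk1 hnpc hnqc hn0 ?_ ?_ hwneg hwnn ?_ ?_ x hnxc ?_ ?_
  · rw [hpc]; exact hin _ _
  · rw [hqc]; exact hin _ _
  · rw [hpc, hqc, hiw, hiw]
  · rw [hpc, hiw]; linarith
  · rw [hxc]; exact hin _ _
  · rw [hpc, hxc, hiw, hiw]; linarith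

lemma exists_orth (v w : E3) : ∃ n : E3, n ≠ 0 ∧ ⟪v,n⟫_ℝ = 0 ∧ ⟪w,n⟫_ℝ = 0 := by
  classical
  set K : Submodule ℝ E3 := Submodule.span ℝ {v, w} with hK
  have hfin : Module.finrank ℝ K ≤ 2 := by
    refine (finrank_span_le_card ({v, w} : Set E3)).trans ?_
    have : ({v, w} : Set E3).toFinset ⊆ {v, w} := by simp
    exact (Finset.card_le_card this).trans (Finset.card_insert_le _ _)
  have hne : Kᗮ ≠ ⊥ := by
    intro hbot
    have htop : K = ⊤ := by
      rw [← Submodule.orthogonal_orthogonal K, hbot, Submodule.bot_orthogonal_eq_top]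
    rw [htop, finrank_top] at hfin
    have h3 : Module.finrank ℝ E3 = 3 := by simp [finrank_euclideanSpace_fin]
    omega
  obtain ⟨n, hnK, hn0⟩ := Submodule.exists_mem_ne_zero_of_ne_bot hne
  refine ⟨n, hn0, ?_, ?_⟩
  · exact (Submodule.mem_orthogonal K n).mp hnK v (Submodule.subset_span (by simp))
  · exact (Submodule.mem_orthogonal K n).mp hnK w (Submodule.subset_span (by simp))

lemma exists_frame (e : E3) : ∃ w n : E3, ‖w‖ = 1 ∧ ⟪e,w⟫_ℝ = 0 ∧ n ≠ 0 ∧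
    ⟪e,n⟫_ℝ = 0 ∧ ⟪w,n⟫_ℝ = 0 := by
  obtain ⟨n1, hn1, he1, -⟩ := exists_orth e e
  set w : E3 := ‖n1‖⁻¹ • n1 with hwdef
  have hn1p : 0 < ‖n1‖ := norm_pos_iff.mpr hn1
  have hw : ‖w‖ = 1 := by
    rw [hwdef, norm_smul, norm_inv, norm_norm]
    field_simp
  have hew : ⟪e,w⟫_ℝ = 0 := by
    rw [hwdef, real_inner_smul_right, he1]; ring
  obtain ⟨n, hn0, hen, hwn⟩ := exists_orth e w
  exact ⟨w, n, hw, hew, hn0, hen, hwn⟩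

set_option maxHeartbeats 1000000 in
lemma seg_mem (S : Set E3) (h : SpindleConvex S) {p q : E3} (hp : p ∈ S) (hq : q ∈ S)
    (hpq : p ≠ q) (ξ : ℝ) (hξ : |ξ| < ‖q - p‖/2) :
    (2:ℝ)⁻¹ • (p + q) + ξ • (‖q - p‖⁻¹ • (q - p)) ∈ S := by
  set d : ℝ := ‖q - p‖ with hd
  have hd0 : 0 < d := by
    rw [hd, norm_pos_iff, sub_ne_zero]; exact hpq.symm
  set e : E3 := d⁻¹ • (q - p) with he_def
  have he : ‖e‖ = 1 := by
    rw [he_def, norm_smul, norm_inv, norm_norm, ← hd]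
    field_simp
  have heqp : q - p = d • e := by
    rw [he_def, smul_smul, mul_inv_cancel₀ (ne_of_gt hd0), one_smul]
  obtain ⟨w, n, hw, hew, hn0, hen, hwn⟩ := exists_frame e
  set L : ℝ := (d/2 - |ξ|)/2 with hL
  have hL0 : 0 < L := by rw [hL]; linarith
  set A : ℝ := d^2/4 - (|ξ| + L)^2 with hA
  have hA0 : 0 < A := by
    rw [hA]
    have h1 : |ξ| + L < d/2 := by rw [hL]; have := abs_nonneg ξ; linarith
    nlinarith [abs_nonneg ξ]
  set ε : ℝ := min (min 1 L) (min (L^2/2) (A/3)) with hε_def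
  have hε : 0 < ε := by
    rw [hε_def]
    refine lt_min (lt_min one_pos hL0) (lt_min (by positivity) (by positivity))
  have hε1 : ε ≤ 1 := le_trans (min_le_left _ _) (min_le_left _ _)
  have hεL : ε ≤ L := le_trans (min_le_left _ _) (min_le_right _ _)
  have hεL2 : ε ≤ L^2/2 := le_trans (min_le_right _ _) (min_le_left _ _)
  have hεA : ε ≤ A/3 := le_trans (min_le_right _ _) (min_le_right _ _)
  have hcond : ∀ ξ' : ℝ, |ξ'| ≤ |ξ| + L → ξ'^2 + ε^2 + 2*ε ≤ d^2/4 := by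
    intro ξ' hξ'
    have h1 : ξ'^2 ≤ (|ξ| + L)^2 := by
      have h2 := abs_nonneg ξ'
      nlinarith [abs_nonneg ξ, sq_abs ξ', hL0]
    have hε2 : ε^2 ≤ ε := by nlinarith
    linarith
  have habs1 : |ξ + L| ≤ |ξ| + L := by
    have := abs_add_le ξ L
    rwa [abs_of_pos hL0] at this
  have habs2 : |ξ - L| ≤ |ξ| + L := by
    have := abs_sub ξ L
    rwa [abs_of_pos hL0] at this
  have hmem1 := arc_mem S h hp hq hpq he hw hew hn0 hen hwn heqp (ξ + L) ε hε
    (hcond (ξ + L) habs1)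
  have hmem2 := arc_mem S h hp hq hpq he hw hew hn0 hen hwn heqp (ξ - L) ε hε
    (hcond (ξ - L) habs2)
  have e1 : (2:ℝ)⁻¹ • (p + q) + (ξ + L) • e + ε • w
      = ((2:ℝ)⁻¹ • (p + q) + ξ • e) + L • e + ε • w := by module
  have e2 : (2:ℝ)⁻¹ • (p + q) + (ξ - L) • e + ε • w
      = ((2:ℝ)⁻¹ • (p + q) + ξ • e) - L • e + ε • w := by module
  rw [e1] at hmem1
  rw [e2] at hmem2
  have hk2 : 2*ε ≤ L^2 + ε^2 := by nlinarith [sq_nonneg ε, hεL2]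
  exact axis_mem S h he hw hew hn0 hen hwn L ε hε hεL hk2 hmem1 hmem2

set_option maxHeartbeats 1000000 in
lemma ball_mem (S : Set E3) (h : SpindleConvex S) {p q : E3} (hp : p ∈ S) (hq : q ∈ S)
    (δ : ℝ) (hδ : 0 < δ) (hdq : δ ≤ ‖q - p‖) :
    ball ((2:ℝ)⁻¹ • (p + q)) (min 1 (min (δ/8) (δ^2/16))) ⊆ S := by
  intro x hx
  set ρ : ℝ := min 1 (min (δ/8) (δ^2/16)) with hρ
  have hρ1 : ρ ≤ 1 := min_le_left _ _
  have hρ2 : ρ ≤ δ/8 := le_trans (min_le_right _ _) (min_le_left _ _)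
  have hρ3 : ρ ≤ δ^2/16 := le_trans (min_le_right _ _) (min_le_right _ _)
  set d : ℝ := ‖q - p‖ with hd
  have hd0 : 0 < d := lt_of_lt_of_le hδ hdq
  have hpq : p ≠ q := by
    intro hEq
    rw [hd, hEq, sub_self, norm_zero] at hd0
    exact lt_irrefl 0 hd0
  set e : E3 := d⁻¹ • (q - p) with he_def
  have he : ‖e‖ = 1 := by
    rw [he_def, norm_smul, norm_inv, norm_norm, ← hd]
    field_simp
  have heqp : q - p = d • e := by
    rw [he_def, smul_smul, mul_inv_cancel₀ (ne_of_gt hd0), one_smul]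
  set m : E3 := (2:ℝ)⁻¹ • (p + q) with hm
  set v : E3 := x - m with hv_def
  have hv : ‖v‖ < ρ := by
    rw [hv_def, ← dist_eq_norm]
    exact mem_ball.mp hx
  have hvnn : 0 ≤ ‖v‖ := norm_nonneg v
  set ξ : ℝ := ⟪v, e⟫_ℝ with hξ_def
  set v' : E3 := v - ξ • e with hv'_def
  have hee : ⟪e, e⟫_ℝ = 1 := by
    rw [real_inner_self_eq_norm_mul_norm, he]; norm_num
  have hv'e : ⟪v', e⟫_ℝ = 0 := by
    rw [hv'_def, inner_sub_left, real_inner_smul_left, hee, hξ_def]; ring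
  have hpyth : ‖v‖^2 = ξ^2 + ‖v'‖^2 := by
    have hsplit : v = ξ • e + v' := by rw [hv'_def]; module
    rw [hsplit, norm_add_sq_real, norm_smul]
    have : ⟪ξ • e, v'⟫_ℝ = 0 := by
      rw [real_inner_smul_left, real_inner_comm, hv'e]; ring
    rw [this, he]
    simp [mul_pow, sq_abs]
  by_cases hv0 : v' = 0
  · -- x is on the axis
    have hveq : v = ξ • e := by
      have := sub_eq_zero.mp hv0
      rw [← this]
    have hξv : |ξ| ≤ ‖v‖ := by
      rw [hveq, norm_smul, he, mul_one, Real.norm_eq_abs]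
    have hξd : |ξ| < ‖q - p‖/2 := by
      rw [← hd]
      have : ρ < d/2 := by nlinarith
      linarith
    have hmem := seg_mem S h hp hq hpq ξ hξd
    have hxeq : (2:ℝ)⁻¹ • (p + q) + ξ • (‖q - p‖⁻¹ • (q - p)) = x := by
      rw [← hd, ← he_def, ← hm, ← hveq, hv_def]
      module
    rwa [hxeq] at hmem
  · -- x is off the axis
    set η : ℝ := ‖v'‖ with hη_def
    have hη0 : 0 < η := norm_pos_iff.mpr hv0
    set w : E3 := η⁻¹ • v' with hw_def
    have hw : ‖w‖ = 1 := by
      rw [hw_def, norm_smul, norm_inv, ← hη_def, Real.norm_eq_abs, abs_of_pos hη0]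
      field_simp
    have hew : ⟪e, w⟫_ℝ = 0 := by
      rw [hw_def, real_inner_smul_right, real_inner_comm, hv'e]; ring
    obtain ⟨n, hn0, hen, hwn⟩ := exists_orth e w
    have hηv : η ≤ ‖v‖ := by
      nlinarith [sq_nonneg ξ]
    have hcond : ξ^2 + η^2 + 2*η ≤ d^2/4 := by
      have h1 : ξ^2 + η^2 < ρ := by nlinarith
      have h2 : η < ρ := lt_of_le_of_lt hηv hv
      have h3 : 3 * ρ ≤ d^2/4 := by nlinarith
      linarith
    have hmem := arc_mem S h hp hq hpq he hw hew hn0 hen hwn heqp ξ η hη0 hcond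
    have hxeq : (2:ℝ)⁻¹ • (p + q) + ξ • e + η • w = x := by
      have h1 : η • w = v' := by
        rw [hw_def, smul_smul, mul_inv_cancel₀ (ne_of_gt hη0), one_smul]
      rw [h1, hv'_def, hv_def, hm]
      module
    rwa [hxeq] at hmem

set_option maxHeartbeats 1000000 in
/-- A spindle-convex subset of ℝ³ is strictly convex: it is convex and its boundary
contains no nondegenerate segment. -/
theorem spindleConvex_strictlyConvex (S : Set E3) (h : SpindleConvex S) :
    Convex ℝ S ∧ ∀ a b : E3, a ≠ b → ¬ (segment ℝ a b ⊆ frontier S) := by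
  constructor
  · -- convexity
    intro x hx y hy a b ha hb hab
    rcases eq_or_ne x y with rfl | hxy
    · have hxx : a • x + b • x = x := by rw [← add_smul, hab, one_smul]
      rwa [hxx]
    rcases eq_or_lt_of_le hb with hb0 | hbpos
    · have ha1 : a = 1 := by linarith
      have : a • x + b • y = x := by rw [← hb0, ha1]; simp
      rwa [this]
    rcases eq_or_lt_of_le (show b ≤ 1 by linarith) with hb1 | hblt
    · have ha0 : a = 0 := by linarith
      have : a • x + b • y = y := by rw [ha0, hb1]; simp
      rwa [this]
    have hd0 : 0 < ‖y - x‖ := by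
      rw [norm_pos_iff, sub_ne_zero]; exact hxy.symm
    have hξd : |(b - 1/2) * ‖y - x‖| < ‖y - x‖/2 := by
      rw [abs_mul, abs_of_pos hd0]
      have : |b - 1/2| < 1/2 := abs_lt.mpr ⟨by linarith, by linarith⟩
      nlinarith
    have hmem := seg_mem S h hx hy hxy ((b - 1/2) * ‖y - x‖) hξd
    have hEq : (2:ℝ)⁻¹ • (x + y) + ((b - 1/2) * ‖y - x‖) • (‖y - x‖⁻¹ • (y - x))
        = a • x + b • y := by
      rw [smul_smul]
      have h1 : (b - 1/2) * ‖y - x‖ * ‖y - x‖⁻¹ = b - 1/2 := by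
        field_simp
      rw [h1]
      have ha' : a = 1 - b := by linarith
      rw [ha']
      module
    rwa [hEq] at hmem
  · -- no segment in the frontier
    intro a b hab hsub
    set d : ℝ := ‖b - a‖ with hd
    have hd0 : 0 < d := by
      rw [hd, norm_pos_iff, sub_ne_zero]; exact hab.symm
    have hyseg : (2:ℝ)⁻¹ • (a + b) ∈ segment ℝ a b :=
      ⟨1/2, 1/2, by norm_num, by norm_num, by norm_num, by module⟩
    have hyf := hsub hyseg
    have hyint : (2:ℝ)⁻¹ • (a + b) ∉ interior S := hyf.2
    have haf : a ∈ closure S := (hsub (left_mem_segment ℝ a b)).1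
    have hbf : b ∈ closure S := (hsub (right_mem_segment ℝ a b)).1
    set ρ : ℝ := min 1 (min (d/2/8) ((d/2)^2/16)) with hρ
    have hρ0 : 0 < ρ := lt_min one_pos (lt_min (by positivity) (by positivity))
    set τ : ℝ := min (d/8) (ρ/4) with hτ
    have hτ0 : 0 < τ := lt_min (by positivity) (by positivity)
    have hτ1 : τ ≤ d/8 := min_le_left _ _
    have hτ2 : τ ≤ ρ/4 := min_le_right _ _
    obtain ⟨a', ha'S, ha'd⟩ := Metric.mem_closure_iff.mp haf τ hτ0
    obtain ⟨b', hb'S, hb'd⟩ := Metric.mem_closure_iff.mp hbf τ hτ0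
    rw [dist_eq_norm] at ha'd hb'd
    have htri : d ≤ ‖b - b'‖ + ‖b' - a'‖ + ‖a' - a‖ := by
      have : b - a = (b - b') + (b' - a') + (a' - a) := by module
      calc d = ‖(b - b') + (b' - a') + (a' - a)‖ := by rw [hd, ← this]
        _ ≤ ‖(b - b') + (b' - a')‖ + ‖a' - a‖ := norm_add_le _ _
        _ ≤ ‖b - b'‖ + ‖b' - a'‖ + ‖a' - a‖ := by
            have := norm_add_le (b - b') (b' - a')
            linarith
    have hba : ‖b - b'‖ < τ := hb'd
    have haa : ‖a' - a‖ < τ := by rw [← norm_neg]; simpa [neg_sub] using ha'd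
    have hδle : d/2 ≤ ‖b' - a'‖ := by linarith
    have hball := ball_mem S h ha'S hb'S (d/2) (by linarith) hδle
    have hsub2 : ball ((2:ℝ)⁻¹ • (a + b)) (ρ/2) ⊆ S := by
      intro z hz
      apply hball
      rw [mem_ball, dist_eq_norm] at hz ⊢
      have hmm : (2:ℝ)⁻¹ • (a + b) - (2:ℝ)⁻¹ • (a' + b') = (2:ℝ)⁻¹ • ((a - a') + (b - b')) := by
        module
      have hmm2 : ‖(2:ℝ)⁻¹ • (a + b) - (2:ℝ)⁻¹ • (a' + b')‖ ≤ τ := by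
        rw [hmm, norm_smul]
        have h1 : ‖(a - a') + (b - b')‖ ≤ ‖a - a'‖ + ‖b - b'‖ := norm_add_le _ _
        have h2 : ‖a - a'‖ < τ := ha'd
        have h3 : ‖b - b'‖ < τ := hba
        have h4 : ‖((2:ℝ)⁻¹ : ℝ)‖ = 2⁻¹ := by norm_num
        rw [h4]
        linarith
      have htri2 : ‖z - (2:ℝ)⁻¹ • (a' + b')‖
          ≤ ‖z - (2:ℝ)⁻¹ • (a + b)‖ + ‖(2:ℝ)⁻¹ • (a + b) - (2:ℝ)⁻¹ • (a' + b')‖ := by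
        have : z - (2:ℝ)⁻¹ • (a' + b') =
            (z - (2:ℝ)⁻¹ • (a + b)) + ((2:ℝ)⁻¹ • (a + b) - (2:ℝ)⁻¹ • (a' + b')) := by module
        rw [this]; exact norm_add_le _ _
      calc ‖z - (2:ℝ)⁻¹ • (a' + b')‖ ≤ _ := htri2
        _ < ρ/2 + τ := by linarith
        _ ≤ ρ := by linarith
    exact hyint (mem_interior.mpr ⟨ball ((2:ℝ)⁻¹ • (a + b)) (ρ/2), hsub2, isOpen_ball,
      mem_ball_self (by positivity)⟩)
end
end

section
/- Simplified Sallee Lemma: Let B be a closed unit ball in ℝ³ centered at z, let a, b ∈ B be distinct, let C be a circle of radius r ≥ 1 with center c passing through a and b, and let A be an open short circular arc of C with endpoints a, b. Then A ⊆ int B, unless a, b ∈ ∂B and r = 1, in which case c = z and C ⊆ ∂B. -/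
open scoped InnerProductSpace
open Metric

noncomputable section

/-- Any vector orthogonal to `m` is the sum of its projections onto `s` and `d`,
whenever `s, d, m` are pairwise orthogonal nonzero vectors of `ℝ³`. -/
lemma ortho_reconstruct (s d m v : E3) (hs : s ≠ 0) (hd : d ≠ 0) (hm : m ≠ 0)
    (hsd : ⟪s, d⟫_ℝ = 0) (hsm : ⟪s, m⟫_ℝ = 0) (hdm : ⟪d, m⟫_ℝ = 0)
    (hvm : ⟪v, m⟫_ℝ = 0) :
    v = (⟪v, s⟫_ℝ / ‖s‖ ^ 2) • s + (⟪v, d⟫_ℝ / ‖d‖ ^ 2) • d := by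
  have hS : (‖s‖ : ℝ) ^ 2 ≠ 0 := pow_ne_zero _ (norm_ne_zero_iff.mpr hs)
  have hD : (‖d‖ : ℝ) ^ 2 ≠ 0 := pow_ne_zero _ (norm_ne_zero_iff.mpr hd)
  have hM : (‖m‖ : ℝ) ^ 2 ≠ 0 := pow_ne_zero _ (norm_ne_zero_iff.mpr hm)
  have hds : ⟪d, s⟫_ℝ = 0 := by rw [real_inner_comm]; exact hsd
  have hms : ⟪m, s⟫_ℝ = 0 := by rw [real_inner_comm]; exact hsm
  have hmd : ⟪m, d⟫_ℝ = 0 := by rw [real_inner_comm]; exact hdm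
  set v' : E3 := v - ((⟪v, s⟫_ℝ / ‖s‖ ^ 2) • s + (⟪v, d⟫_ℝ / ‖d‖ ^ 2) • d) with hv'
  have h1 : ⟪v', s⟫_ℝ = 0 := by
    simp only [hv', inner_sub_left, inner_add_left, real_inner_smul_left,
      real_inner_self_eq_norm_sq, hds]
    rw [mul_zero, add_zero, div_mul_cancel₀ _ hS, sub_self]
  have h2 : ⟪v', d⟫_ℝ = 0 := by
    simp only [hv', inner_sub_left, inner_add_left, real_inner_smul_left,
      real_inner_self_eq_norm_sq, hsd]
    rw [mul_zero, zero_add, div_mul_cancel₀ _ hD, sub_self]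
  have h3 : ⟪v', m⟫_ℝ = 0 := by
    simp only [hv', inner_sub_left, inner_add_left, real_inner_smul_left, hsm, hdm, hvm]
    ring
  have hli : LinearIndependent ℝ ![s, d, m] := by
    rw [Fintype.linearIndependent_iff]
    intro g hg
    have hg' : g 0 • s + g 1 • d + g 2 • m = 0 := by
      simpa [Fin.sum_univ_three] using hg
    have e1 : g 0 * ‖s‖ ^ 2 = 0 := by
      have h := congrArg (fun x => ⟪x, s⟫_ℝ) hg'
      simp only [inner_add_left, real_inner_smul_left, real_inner_self_eq_norm_sq,
        hds, hms, inner_zero_left,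
        mul_zero, add_zero] at h
      exact h
    have e2 : g 1 * ‖d‖ ^ 2 = 0 := by
      have h := congrArg (fun x => ⟪x, d⟫_ℝ) hg'
      simp only [inner_add_left, real_inner_smul_left, real_inner_self_eq_norm_sq,
        hsd, hmd, inner_zero_left, mul_zero, add_zero,
        zero_add] at h
      exact h
    have e3 : g 2 * ‖m‖ ^ 2 = 0 := by
      have h := congrArg (fun x => ⟪x, m⟫_ℝ) hg'
      simp only [inner_add_left, real_inner_smul_left, real_inner_self_eq_norm_sq,
        hsm, hdm, inner_zero_left, mul_zero, add_zero, zero_add] at h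
      exact h
    intro i
    fin_cases i
    · exact (mul_eq_zero.mp e1).resolve_right hS
    · exact (mul_eq_zero.mp e2).resolve_right hD
    · exact (mul_eq_zero.mp e3).resolve_right hM
  have hspan : Submodule.span ℝ (Set.range ![s, d, m]) = ⊤ := by
    apply Submodule.eq_top_of_finrank_eq
    rw [finrank_span_eq_card hli]
    simp [finrank_euclideanSpace]
  have htop : (⊤ : Submodule ℝ E3) ≤ (ℝ ∙ v')ᗮ := by
    rw [← hspan]
    apply Submodule.span_le.mpr
    rintro x ⟨i, rfl⟩
    rw [SetLike.mem_coe, Submodule.mem_orthogonal_singleton_iff_inner_right]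
    fin_cases i
    · simpa [real_inner_comm] using h1
    · simpa [real_inner_comm] using h2
    · simpa [real_inner_comm] using h3
  have hv0 : v' = 0 := by
    have h := htop (Submodule.mem_top (R := ℝ) (M := E3) (x := v'))
    have := Submodule.inner_left_of_mem_orthogonal
      (Submodule.mem_span_singleton_self v') h
    exact inner_self_eq_zero.mp this
  have h : v - ((⟪v, s⟫_ℝ / ‖s‖ ^ 2) • s + (⟪v, d⟫_ℝ / ‖d‖ ^ 2) • d) = 0 := hv0
  exact sub_eq_zero.mp h

/-- Purely arithmetic core of the Sallee lemma. -/
lemma sallee_key_core (S D M p1 p2 w1 w2 : ℝ) (hS : 0 < S) (hD : 0 < D) (hM : 0 < M)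
    (h1 : 2*M ≤ w1 + w2) (h2 : 2*M ≤ w1 - w2) (hp1 : S/2 < p1)
    (hcirc : 4*(p1^2*D + p2^2*S) = S*D*(S+D)) :
    M*(S*D) < p1*w1*D + p2*w2*S := by
  have hw1 : 2*M ≤ w1 := by linarith
  have hp1sq : S^2/4 < p1^2 := by nlinarith
  have hp2sq : p2^2 < D^2/4 := by
    have h4 := mul_lt_mul_of_pos_right hp1sq hD
    have h5 : p2^2*S < (D^2/4)*S := by nlinarith
    exact lt_of_mul_lt_mul_right h5 hS.le
  have hC : 0 < M*(D*(2*p1-S)) := mul_pos hM (mul_pos hD (by linarith))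
  rcases le_or_gt 0 p2 with h | h
  · have hp2' : p2 < D/2 := by nlinarith
    have hA : 0 ≤ S*p2*(w1+w2-2*M) := mul_nonneg (mul_nonneg hS.le h) (by linarith)
    have hB : 0 ≤ (w1-2*M)*(D*p1-S*p2) := mul_nonneg (by linarith) (by nlinarith)
    nlinarith [hA, hB, hC]
  · have hp2' : -(D/2) < p2 := by nlinarith
    have hA : 0 ≤ S*(-p2)*(w1-w2-2*M) :=
      mul_nonneg (mul_nonneg hS.le (by linarith)) (by linarith)
    have hB : 0 ≤ (w1-2*M)*(D*p1+S*p2) := mul_nonneg (by linarith) (by nlinarith)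
    nlinarith [hA, hB, hC]

lemma sallee_key_ineq (S D M t p1 p2 w1 w2 pw r : ℝ)
    (hS : 0 < S) (hD : 0 < D) (hM : 0 < M) (ht : 0 < t)
    (h1 : 2*M ≤ w1 + w2) (h2 : 2*M ≤ w1 - w2)
    (hqu : t < 2*t/S*p1)
    (hcirc : p1^2/S + p2^2/D = r^2) (hSD : S + D = 4*r^2)
    (hpw : pw = p1/S*w1 + p2/D*w2) : M < pw := by
  have hp1 : S/2 < p1 := by
    rw [div_mul_eq_mul_div, lt_div_iff₀ hS] at hqu
    nlinarith
  have hcirc2 : p1^2*D + p2^2*S = r^2*(S*D) := by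
    field_simp at hcirc
    linarith
  have hcirc' : 4*(p1^2*D + p2^2*S) = S*D*(S+D) := by
    have h6 : (S+D)*(S*D) = (4*r^2)*(S*D) := by rw [hSD]
    nlinarith [hcirc2, h6]
  have hmain := sallee_key_core S D M p1 p2 w1 w2 hS hD hM h1 h2 hp1 hcirc'
  have hfrac : (p1*w1*D + p2*w2*S)/(S*D) = p1/S*w1 + p2/D*w2 := by
    field_simp
  rw [hpw, ← hfrac, lt_div_iff₀ (mul_pos hS hD)]
  linarith

/-- Geometric core: a point of the open short arc is strictly on the far side of
the chord hyperplane determined by `w`. -/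
lemma sallee_core (α β q w nv uv : E3) (M r : ℝ)
    (hab : α ≠ β) (hα : ‖α‖ = r) (hβ : ‖β‖ = r)
    (hn : nv ≠ 0) (hαn : ⟪α, nv⟫_ℝ = 0) (hβn : ⟪β, nv⟫_ℝ = 0)
    (hu : uv ≠ 0) (hun : ⟪uv, nv⟫_ℝ = 0)
    (huab : ⟪α, uv⟫_ℝ = ⟪β, uv⟫_ℝ) (hshort : 0 ≤ ⟪α, uv⟫_ℝ)
    (hM : 0 < M) (haw : M ≤ ⟪α, w⟫_ℝ) (hbw : M ≤ ⟪β, w⟫_ℝ)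
    (hqn : ⟪q, nv⟫_ℝ = 0) (hq : ‖q‖ = r) (hqu : ⟪α, uv⟫_ℝ < ⟪q, uv⟫_ℝ) :
    M < ⟪q, w⟫_ℝ := by
  have hσ0 : α + β ≠ 0 := by
    intro h0
    have hβα : β = -α := eq_neg_of_add_eq_zero_right h0
    rw [hβα, inner_neg_left] at hbw
    linarith
  have hδ0 : α - β ≠ 0 := sub_ne_zero.mpr hab
  have hσδ : ⟪α + β, α - β⟫_ℝ = 0 := by
    rw [inner_add_left, inner_sub_right, inner_sub_right,
      real_inner_self_eq_norm_sq, real_inner_self_eq_norm_sq, hα, hβ,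
      real_inner_comm β α]
    ring
  have hσn : ⟪α + β, nv⟫_ℝ = 0 := by rw [inner_add_left, hαn, hβn, add_zero]
  have hδn : ⟪α - β, nv⟫_ℝ = 0 := by rw [inner_sub_left, hαn, hβn, sub_zero]
  have huδ : ⟪uv, α - β⟫_ℝ = 0 := by
    rw [inner_sub_right, real_inner_comm α uv, real_inner_comm β uv, huab, sub_self]
  have hSpos : (0:ℝ) < ‖α + β‖ ^ 2 := pow_pos (norm_pos_iff.mpr hσ0) 2
  have hDpos : (0:ℝ) < ‖α - β‖ ^ 2 := pow_pos (norm_pos_iff.mpr hδ0) 2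
  have huσ : ⟪uv, α + β⟫_ℝ = 2 * ⟪α, uv⟫_ℝ := by
    rw [inner_add_right, real_inner_comm α uv, real_inner_comm β uv, ← huab]
    ring
  have hurec := ortho_reconstruct (α + β) (α - β) nv uv hσ0 hδ0 hn hσδ hσn hδn hun
  rw [huδ, huσ] at hurec
  simp only [zero_div, zero_smul, add_zero] at hurec
  have ht : 0 < ⟪α, uv⟫_ℝ := by
    rcases lt_or_eq_of_le hshort with h | h
    · exact h
    · exfalso
      apply hu
      rw [hurec, ← h]
      simp
  have hπrec := ortho_reconstruct (α + β) (α - β) nv q hσ0 hδ0 hn hσδ hσn hδn hqn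
  have hqu' : ⟪q, uv⟫_ℝ
      = 2 * ⟪α, uv⟫_ℝ / ‖α + β‖ ^ 2 * ⟪q, α + β⟫_ℝ := by
    have h := congrArg (fun x => ⟪q, x⟫_ℝ) hurec
    simpa only [real_inner_smul_right] using h
  rw [hqu'] at hqu
  have h1 : ⟪q, q⟫_ℝ = r ^ 2 := by rw [real_inner_self_eq_norm_sq, hq]
  have h2 := congrArg (fun x => ⟪x, q⟫_ℝ) hπrec
  try simp only at h2
  rw [inner_add_left, real_inner_smul_left, real_inner_smul_left,
    real_inner_comm q (α + β), real_inner_comm q (α - β), h1] at h2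
  have hcirc : ⟪q, α + β⟫_ℝ ^ 2 / ‖α + β‖ ^ 2 + ⟪q, α - β⟫_ℝ ^ 2 / ‖α - β‖ ^ 2
      = r ^ 2 := by
    rw [eq_comm, h2]; ring
  have hSD : ‖α + β‖ ^ 2 + ‖α - β‖ ^ 2 = 4 * r ^ 2 := by
    have ha1 := norm_add_sq_real α β
    have ha2 := norm_sub_sq_real α β
    rw [hα, hβ] at ha1 ha2
    linarith
  have hw1 : ⟪α + β, w⟫_ℝ + ⟪α - β, w⟫_ℝ = 2 * ⟪α, w⟫_ℝ := by
    rw [inner_add_left, inner_sub_left]; ring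
  have hw2 : ⟪α + β, w⟫_ℝ - ⟪α - β, w⟫_ℝ = 2 * ⟪β, w⟫_ℝ := by
    rw [inner_add_left, inner_sub_left]; ring
  have h3 := congrArg (fun x => ⟪x, w⟫_ℝ) hπrec
  try simp only at h3
  rw [inner_add_left, real_inner_smul_left, real_inner_smul_left] at h3
  exact sallee_key_ineq (‖α + β‖ ^ 2) (‖α - β‖ ^ 2) M (⟪α, uv⟫_ℝ)
    (⟪q, α + β⟫_ℝ) (⟪q, α - β⟫_ℝ) (⟪α + β, w⟫_ℝ) (⟪α - β, w⟫_ℝ) (⟪q, w⟫_ℝ) r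
    hSpos hDpos hM ht (by linarith) (by linarith) hqu hcirc hSD h3

/-- Simplified Sallee Lemma.  Let `B` be the closed unit ball centered at `z`, let
`a ≠ b` be points of `B`, and let `C` be the circle of radius `r ≥ 1` centered at `c`
lying in the plane through `c` with normal `n` and passing through `a` and `b`.
Let `A` be an open short circular arc of `C` with endpoints `a, b`
(cut off strictly by a hyperplane through the chord `[a,b]` with in-plane direction `u`
pointing to the short side).  Then `A ⊆ int B`, with one exception: if
`a, b ∈ ∂B` and `r = 1`, then `c = z` and `C ⊆ ∂B`. -/
theorem simplified_sallee (z a b c n u : E3) (r : ℝ)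
    (hab : a ≠ b) (ha : ‖a - z‖ ≤ 1) (hb : ‖b - z‖ ≤ 1)
    (hr : 1 ≤ r) (hac : ‖a - c‖ = r) (hbc : ‖b - c‖ = r)
    (hn : n ≠ 0) (han : ⟪a - c, n⟫_ℝ = 0) (hbn : ⟪b - c, n⟫_ℝ = 0)
    (hu : u ≠ 0) (hun : ⟪u, n⟫_ℝ = 0)
    (huab : ⟪a - c, u⟫_ℝ = ⟪b - c, u⟫_ℝ) (hshort : 0 ≤ ⟪a - c, u⟫_ℝ) :
    (∀ p : E3, ‖p - c‖ = r → ⟪p - c, n⟫_ℝ = 0 → ⟪a - c, u⟫_ℝ < ⟪p - c, u⟫_ℝ →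
        ‖p - z‖ < 1)
    ∨ (‖a - z‖ = 1 ∧ ‖b - z‖ = 1 ∧ r = 1 ∧ c = z ∧
        ∀ p : E3, ‖p - c‖ = r → ⟪p - c, n⟫_ℝ = 0 → ‖p - z‖ = 1) := by
  have hexp : ∀ x : E3, ‖x - z‖ ^ 2
      = ‖x - c‖ ^ 2 - 2 * ⟪x - c, z - c⟫_ℝ + ‖z - c‖ ^ 2 := by
    intro x
    have hx : x - z = (x - c) - (z - c) := by abel
    rw [hx, norm_sub_sq_real]
  by_cases hM : r ^ 2 + ‖z - c‖ ^ 2 ≤ 1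
  · -- exceptional case
    right
    have hr2 : (1:ℝ) ≤ r ^ 2 := by nlinarith
    have hzsq : ‖z - c‖ ^ 2 = 0 :=
      le_antisymm (by nlinarith) (sq_nonneg _)
    have hzc : ‖z - c‖ = 0 := by
      have := sq_nonneg ‖z - c‖
      nlinarith [norm_nonneg (z - c), abs_norm (z - c)]
    have hr1 : r = 1 := le_antisymm (by nlinarith [norm_nonneg (z - c)]) hr
    have hcz : c = z := by
      have h0 : z - c = 0 := norm_eq_zero.mp hzc
      exact (sub_eq_zero.mp h0).symm
    have hA : ‖a - z‖ = 1 := by rw [← hcz, hac, hr1]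
    have hB : ‖b - z‖ = 1 := by rw [← hcz, hbc, hr1]
    exact ⟨hA, hB, hr1, hcz, fun p hp _ => by rw [← hcz, hp, hr1]⟩
  · -- main case
    left
    intro p hp hpn hpu
    push_neg at hM
    have hMpos : 0 < (r ^ 2 + ‖z - c‖ ^ 2 - 1) / 2 := by linarith
    have haw : (r ^ 2 + ‖z - c‖ ^ 2 - 1) / 2 ≤ ⟪a - c, z - c⟫_ℝ := by
      have h1 : ‖a - z‖ ^ 2 ≤ 1 := by nlinarith [norm_nonneg (a - z)]
      have h2 := hexp a
      rw [hac] at h2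
      nlinarith
    have hbw : (r ^ 2 + ‖z - c‖ ^ 2 - 1) / 2 ≤ ⟪b - c, z - c⟫_ℝ := by
      have h1 : ‖b - z‖ ^ 2 ≤ 1 := by nlinarith [norm_nonneg (b - z)]
      have h2 := hexp b
      rw [hbc] at h2
      nlinarith
    have habc : a - c ≠ b - c := fun h => hab (by
      have := sub_left_inj.mp h
      exact this)
    have hcore := sallee_core (a - c) (b - c) (p - c) (z - c) n u
      ((r ^ 2 + ‖z - c‖ ^ 2 - 1) / 2) r habc hac hbc hn han hbn hu hun huab hshort
      hMpos haw hbw hpn hp hpu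
    have h2 := hexp p
    rw [hp] at h2
    have hfin : ‖p - z‖ ^ 2 < 1 := by linarith
    nlinarith [hfin, norm_nonneg (p - z)]
end
end

section
/- A point v of a finite set V ⊆ ℝ³ with circumradius < 1 is essential (i.e., 𝓑(V) ⊊ 𝓑(V \ {v})) if and only if there exists x ∈ ℝ³ with ‖x − v‖ = 1 and ‖x − w‖ < 1 for all w ∈ V \ {v}. -/
open scoped InnerProductSpace
open Metric

noncomputable section

/-- The ball set of `V`: the set of all `y` within distance `1` of every point of `V`,
i.e. the intersection of all closed unit balls centered at points of `V`. -/
def ballSet (V : Set E3) : Set E3 := {y | ∀ x ∈ V, ‖x - y‖ ≤ 1}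

lemma ballSet_mono {V W : Set E3} (h : W ⊆ V) : ballSet V ⊆ ballSet W :=
  fun _ hy x hx => hy x (h hx)

lemma norm_convex (a b : E3) (t : ℝ) (ht0 : 0 ≤ t) (ht1 : t ≤ 1) :
    ‖(1 - t) • a + t • b‖ ≤ (1 - t) * ‖a‖ + t * ‖b‖ := by
  calc ‖(1 - t) • a + t • b‖ ≤ ‖(1 - t) • a‖ + ‖t • b‖ := norm_add_le _ _
    _ = (1 - t) * ‖a‖ + t * ‖b‖ := by
        rw [norm_smul, norm_smul, Real.norm_eq_abs, Real.norm_eq_abs,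
          abs_of_nonneg (by linarith), abs_of_nonneg ht0]

/-- A point v of a finite set V with circumradius < 1 is essential
(𝓑(V) ⊊ 𝓑(V \ {v})) iff there is x with ‖x - v‖ = 1 and ‖x - w‖ < 1 for all
w ∈ V \ {v}. -/
theorem essential_iff (V : Set E3) (hfin : V.Finite)
    (hcr : ∃ (c : E3) (ρ : ℝ), ρ < 1 ∧ V ⊆ Metric.closedBall c ρ)
    (v : E3) (hv : v ∈ V) :
    ballSet V ⊂ ballSet (V \ {v}) ↔
      ∃ x : E3, ‖x - v‖ = 1 ∧ ∀ w ∈ V \ {v}, ‖x - w‖ < 1 := by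
  constructor
  · rintro h
    obtain ⟨c, ρ, hρ, hVc⟩ := hcr
    obtain ⟨x₀, hx₀, hx₀'⟩ := Set.exists_of_ssubset h
    -- x₀ violates the ball condition only at v
    have hvx₀ : 1 < ‖v - x₀‖ := by
      by_contra hc
      push_neg at hc
      apply hx₀'
      intro u hu
      by_cases huv : u = v
      · simpa [huv] using hc
      · exact hx₀ u ⟨hu, huv⟩
    -- walk from c towards x₀
    set g : ℝ → ℝ := fun t => ‖(c + t • (x₀ - c)) - v‖ with hg
    have hcont : ContinuousOn g (Set.Icc (0:ℝ) 1) := by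
      apply Continuous.continuousOn
      continuity
    have hg0 : g 0 ≤ ρ := by
      have := hVc hv
      simp only [Metric.mem_closedBall, dist_eq_norm] at this
      simpa [hg, norm_sub_rev] using this
    have hg1 : 1 < g 1 := by
      simpa [hg, norm_sub_rev] using hvx₀
    have h1mem : (1:ℝ) ∈ Set.Icc (g 0) (g 1) := ⟨by linarith, le_of_lt hg1⟩
    obtain ⟨t, htmem, hgt⟩ := intermediate_value_Icc (by norm_num : (0:ℝ) ≤ 1) hcont h1mem
    obtain ⟨ht0, ht1⟩ := htmem
    have ht1' : t < 1 := by
      rcases lt_or_eq_of_le ht1 with h' | h'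
      · exact h'
      · exfalso; rw [h'] at hgt; linarith
    refine ⟨c + t • (x₀ - c), hgt, ?_⟩
    intro w hw
    have hident : (c + t • (x₀ - c)) - w = (1 - t) • (c - w) + t • (x₀ - w) := by
      module
    have hcw : ‖c - w‖ ≤ ρ := by
      have := hVc hw.1
      simp only [Metric.mem_closedBall, dist_eq_norm] at this
      simpa [norm_sub_rev] using this
    have hx₀w : ‖x₀ - w‖ ≤ 1 := by
      have := hx₀ w hw
      simpa [norm_sub_rev] using this
    calc ‖(c + t • (x₀ - c)) - w‖ = ‖(1 - t) • (c - w) + t • (x₀ - w)‖ := by rw [hident]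
      _ ≤ (1 - t) * ‖c - w‖ + t * ‖x₀ - w‖ := norm_convex _ _ t ht0 ht1
      _ ≤ (1 - t) * ρ + t * 1 := by
          gcongr <;> nlinarith [norm_nonneg (c - w)]
      _ < 1 := by nlinarith
  · rintro ⟨x, hxv, hxw⟩
    -- find a uniform gap t > 0
    have hSfin : (V \ {v}).Finite := hfin.diff
    obtain ⟨t, ht0, ht⟩ : ∃ t > 0, ∀ w ∈ V \ {v}, ‖x - w‖ + t < 1 := by
      by_cases hS : (V \ {v}) = ∅
      · exact ⟨1, one_pos, fun w hw => by simp [hS] at hw⟩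
      · have hne : hSfin.toFinset.Nonempty := by
          rw [Set.Finite.toFinset_nonempty]
          exact Set.nonempty_iff_ne_empty.2 hS
        set M := hSfin.toFinset.sup' hne (fun w => ‖x - w‖) with hM
        have hMlt : M < 1 := by
          rw [hM, Finset.sup'_lt_iff]
          intro w hw
          exact hxw w (hSfin.mem_toFinset.1 hw)
        refine ⟨(1 - M) / 2, by linarith, fun w hw => ?_⟩
        have : ‖x - w‖ ≤ M :=
          Finset.le_sup' (fun w => ‖x - w‖) (hSfin.mem_toFinset.2 hw)
        linarith
    have hsub : ballSet V ⊆ ballSet (V \ {v}) := ballSet_mono Set.diff_subset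
    refine ⟨hsub, fun hrev => ?_⟩
    -- x' := x + t • (x - v) lies in ballSet (V \ {v}) but not in ballSet V
    set x' := x + t • (x - v) with hx'
    have hx'mem : x' ∈ ballSet (V \ {v}) := by
      intro w hw
      have h1 : w - x' = (w - x) - t • (x - v) := by rw [hx']; module
      calc ‖w - x'‖ ≤ ‖w - x‖ + ‖t • (x - v)‖ := by
            rw [h1]; exact norm_sub_le _ _
        _ = ‖x - w‖ + t * ‖x - v‖ := by
            rw [norm_sub_rev, norm_smul, Real.norm_eq_abs, abs_of_pos ht0]
        _ ≤ 1 := by rw [hxv]; have := ht w hw; linarith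
    have hx'not : x' ∉ ballSet V := by
      intro hc
      have := hc v hv
      have h2 : v - x' = (1 + t) • (v - x) := by rw [hx']; module
      rw [h2, norm_smul, Real.norm_eq_abs, abs_of_pos (by linarith), norm_sub_rev, hxv] at this
      linarith [this]
    exact hx'not (hrev hx'mem)
end
end

section
/- If V ⊆ ℝ³ is finite with circumradius < 1 and v, v′ ∈ V are both inessential in V, then v′ is inessential in V \ {v}. Consequently 𝓑(V) = 𝓑(ess(V)), where ess(V) is the set of essential points of V. -/
open scoped InnerProductSpace
open Metric

noncomputable section

/-- v is essential in V if removing it strictly enlarges the ball set. -/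
def Essential (V : Set E3) (v : E3) : Prop := ballSet V ≠ ballSet (V \ {v})

lemma ballSet_anti {s t : Set E3} (h : s ⊆ t) : ballSet t ⊆ ballSet s :=
  fun _ hy x hx => hy x (h hx)

lemma key_lemma (V : Set E3) (hfin : V.Finite)
    (hcr : ∃ (c : E3) (ρ : ℝ), ρ < 1 ∧ V ⊆ Metric.closedBall c ρ)
    (v v' : E3) (hv : v ∈ V) (hv' : v' ∈ V) (hne : v ≠ v')
    (hiv : ¬ Essential V v) (hiv' : ¬ Essential V v') :
    ¬ Essential (V \ {v}) v' := by
  rw [Essential, not_ne_iff] at hiv hiv'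
  intro hE
  rw [Essential] at hE
  -- extract a witness y
  have hsub : ballSet (V \ {v}) ⊆ ballSet ((V \ {v}) \ {v'}) :=
    ballSet_anti Set.diff_subset
  obtain ⟨y, hy1, hy2⟩ : ∃ y, y ∈ ballSet ((V \ {v}) \ {v'}) ∧ y ∉ ballSet (V \ {v}) := by
    by_contra h
    push_neg at h
    exact hE (hsub.antisymm h)
  have hy1' : ∀ x ∈ V, x ≠ v → x ≠ v' → ‖x - y‖ ≤ 1 := by
    intro x hx hxv hxv'
    exact hy1 x ⟨⟨hx, hxv⟩, hxv'⟩
  have hyv' : 1 < ‖v' - y‖ := by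
    by_contra h
    push_neg at h
    apply hy2
    intro x hx
    rcases eq_or_ne x v' with rfl | hxv'
    · exact h
    · exact hy1' x hx.1 hx.2 hxv'
  obtain ⟨c, ρ, hρ, hVc⟩ := hcr
  have hdist : ∀ x ∈ V, ‖x - c‖ ≤ ρ := by
    intro x hx
    have := hVc hx
    rwa [Metric.mem_closedBall, dist_eq_norm] at this
  set φ : ℝ → E3 := fun t => y + t • (c - y) with hφ
  have hcont : Continuous (fun t => ‖v' - φ t‖) := by fun_prop
  have h0 : 1 < ‖v' - φ 0‖ := by simpa [hφ] using hyv'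
  have h1 : ‖v' - φ 1‖ < 1 := by
    have : φ 1 = c := by simp [hφ]
    rw [this]
    exact lt_of_le_of_lt (hdist v' hv') hρ
  obtain ⟨t, ht, hgt⟩ : ∃ t ∈ Set.Icc (0:ℝ) 1, ‖v' - φ t‖ = 1 := by
    have := intermediate_value_Icc' (by norm_num : (0:ℝ) ≤ 1) hcont.continuousOn
      (Set.mem_Icc.2 ⟨h1.le, h0.le⟩)
    obtain ⟨t, ht, hgt⟩ := this
    exact ⟨t, ht, hgt⟩
  have htpos : 0 < t := by
    rcases lt_or_eq_of_le ht.1 with h | h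
    · exact h
    · exfalso; rw [← h] at hgt; rw [hgt] at h0; exact lt_irrefl _ h0
  set z := φ t with hz
  have hzx : ∀ x ∈ V, x ≠ v → x ≠ v' → ‖x - z‖ < 1 := by
    intro x hx hxv hxv'
    have hxy : ‖x - y‖ ≤ 1 := hy1' x hx hxv hxv'
    have hxc : ‖x - c‖ ≤ ρ := hdist x hx
    have heq : x - z = (1 - t) • (x - y) + t • (x - c) := by
      simp only [hz, hφ]
      module
    calc ‖x - z‖ = ‖(1 - t) • (x - y) + t • (x - c)‖ := by rw [heq]
      _ ≤ ‖(1 - t) • (x - y)‖ + ‖t • (x - c)‖ := norm_add_le _ _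
      _ = (1 - t) * ‖x - y‖ + t * ‖x - c‖ := by
          rw [norm_smul, norm_smul, Real.norm_eq_abs, Real.norm_eq_abs,
            abs_of_nonneg (by linarith [ht.2]), abs_of_nonneg ht.1]
      _ ≤ (1 - t) * 1 + t * ρ := by
          apply add_le_add
          · exact mul_le_mul_of_nonneg_left hxy (by linarith [ht.2])
          · exact mul_le_mul_of_nonneg_left hxc ht.1
      _ < 1 := by nlinarith
  have hzv' : ‖v' - z‖ = 1 := hgt
  have hzball : z ∈ ballSet (V \ {v}) := by
    intro x hx
    rcases eq_or_ne x v' with rfl | hxv'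
    · exact le_of_eq hzv'
    · exact (hzx x hx.1 hx.2 hxv').le
  have hzv : ‖v - z‖ ≤ 1 := by
    have : z ∈ ballSet V := by rw [hiv]; exact hzball
    exact this v hv
  -- perturbation
  set a := z - v with ha
  set b := z - v' with hb
  set d := v - v' with hd
  have hd0 : d ≠ 0 := sub_ne_zero.2 hne
  have ha1 : ‖a‖ ≤ 1 := by rwa [ha, norm_sub_rev]
  have hb1 : ‖b‖ = 1 := by rw [hb, norm_sub_rev]; exact hzv'
  have hs : ⟪a, b⟫_ℝ < 1 := by
    have hd2 : (0:ℝ) < ‖d‖ ^ 2 := pow_pos (norm_pos_iff.mpr hd0) 2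
    have hba : b - a = d := by rw [ha, hb, hd]; abel
    have hexp : ‖b - a‖ ^ 2 = ‖b‖ ^ 2 - 2 * ⟪b, a⟫_ℝ + ‖a‖ ^ 2 := norm_sub_sq_real b a
    rw [hba, hb1] at hexp
    rw [real_inner_comm]
    nlinarith [norm_nonneg a]
  have hbd : 0 < ⟪b, d⟫_ℝ := by
    have hba : d = b - a := by rw [ha, hb, hd]; abel
    rw [hba, inner_sub_right, real_inner_self_eq_norm_sq, hb1, real_inner_comm]
    nlinarith
  -- pick a small ε
  have hA : ∀ᶠ ε in nhdsWithin (0:ℝ) (Set.Ioi 0),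
      ∀ x ∈ V, x ≠ v → x ≠ v' → ‖x - (z + ε • d)‖ < 1 := by
    apply Filter.Eventually.filter_mono nhdsWithin_le_nhds
    rw [Filter.eventually_all_finite hfin]
    intro x hx
    by_cases hxv : x = v
    · exact Filter.Eventually.of_forall fun ε h => absurd hxv h
    by_cases hxv' : x = v'
    · exact Filter.Eventually.of_forall fun ε _ h => absurd hxv' h
    have hc : ContinuousAt (fun ε : ℝ => ‖x - (z + ε • d)‖) 0 := by fun_prop
    have h0' : ‖x - (z + (0:ℝ) • d)‖ < 1 := by
      simpa using hzx x hx hxv hxv'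
    have := hc.eventually_lt continuousAt_const h0'
    filter_upwards [this] with ε hε _ _
    exact hε
  have hB : ∀ᶠ ε in nhdsWithin (0:ℝ) (Set.Ioi 0), ε ∈ Set.Ioc (0:ℝ) 1 :=
    Ioc_mem_nhdsGT one_pos
  obtain ⟨ε, hεA, hε01⟩ := (hA.and hB).exists
  have hε0 : 0 < ε := hε01.1
  have hε1 : ε ≤ 1 := hε01.2
  set w := z + ε • d with hw
  have hwv : ‖v - w‖ ≤ 1 := by
    have heq : v - w = -((1 - ε) • a + ε • b) := by
      rw [hw, ha, hb, hd]; module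
    calc ‖v - w‖ = ‖(1 - ε) • a + ε • b‖ := by rw [heq, norm_neg]
      _ ≤ ‖(1 - ε) • a‖ + ‖ε • b‖ := norm_add_le _ _
      _ = (1 - ε) * ‖a‖ + ε * ‖b‖ := by
          rw [norm_smul, norm_smul, Real.norm_eq_abs, Real.norm_eq_abs,
            abs_of_nonneg (by linarith), abs_of_nonneg hε0.le]
      _ ≤ (1 - ε) * 1 + ε * 1 := by
          apply add_le_add
          · exact mul_le_mul_of_nonneg_left ha1 (by linarith)
          · rw [hb1]
      _ = 1 := by ring
  have hwv' : 1 < ‖v' - w‖ := by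
    have heq : v' - w = -(b + ε • d) := by
      rw [hw, hb]; module
    have hsq : ‖v' - w‖ ^ 2 = ‖b‖ ^ 2 + 2 * (ε * ⟪b, d⟫_ℝ) + ε ^ 2 * ‖d‖ ^ 2 := by
      rw [heq, norm_neg, norm_add_sq_real, real_inner_smul_right, norm_smul,
        Real.norm_eq_abs, abs_of_nonneg hε0.le, mul_pow]
    rw [hb1] at hsq
    have hgt1 : 1 < ‖v' - w‖ ^ 2 := by
      rw [hsq]
      have hp1 : 0 < ε * ⟪b, d⟫_ℝ := mul_pos hε0 hbd
      have hp2 : 0 ≤ ε ^ 2 * ‖d‖ ^ 2 := by positivity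
      linarith
    exact lt_of_pow_lt_pow_left₀ 2 (norm_nonneg _) (by rw [one_pow]; exact hgt1)
  have hwball : w ∈ ballSet V := by
    rw [hiv']
    intro x hx
    rcases eq_or_ne x v with rfl | hxv
    · exact hwv
    · exact (hεA x hx.1 hxv hx.2).le
  exact absurd (hwball v' hv') (not_le.2 hwv')

lemma ball_eq_ess : ∀ (n : ℕ) (V : Set E3), V.Finite → V.ncard ≤ n →
    (∃ (c : E3) (ρ : ℝ), ρ < 1 ∧ V ⊆ Metric.closedBall c ρ) →
    ballSet V = ballSet {v | v ∈ V ∧ Essential V v} := by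
  intro n
  induction n with
  | zero =>
    intro V hfin hcard _
    have hV : V = ∅ := by
      rw [← Set.ncard_eq_zero hfin]
      omega
    subst hV
    have : {v | v ∈ (∅ : Set E3) ∧ Essential ∅ v} = (∅ : Set E3) := by
      ext w; simp
    rw [this]
  | succ n ih =>
    intro V hfin hcard hcr
    by_cases hall : ∀ v ∈ V, Essential V v
    · have : {v | v ∈ V ∧ Essential V v} = V := by
        ext w
        exact ⟨fun h => h.1, fun h => ⟨h, hall w h⟩⟩
      rw [this]
    · push_neg at hall
      obtain ⟨v, hv, hvE⟩ := hall
      obtain ⟨c, ρ, hρ, hVc⟩ := hcr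
      have hdiff_fin : (V \ {v}).Finite := hfin.diff
      have hcard' : (V \ {v}).ncard ≤ n := by
        have := Set.ncard_diff_singleton_lt_of_mem hv hfin
        omega
      have h1 : ballSet V = ballSet (V \ {v}) := not_ne_iff.1 hvE
      have h2 := ih (V \ {v}) hdiff_fin hcard'
        ⟨c, ρ, hρ, Set.Subset.trans Set.diff_subset hVc⟩
      have hsub1 : {w | w ∈ V \ {v} ∧ Essential (V \ {v}) w} ⊆
          {w | w ∈ V ∧ Essential V w} := by
        rintro w ⟨⟨hwV, hwv⟩, hwE⟩
        refine ⟨hwV, ?_⟩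
        by_contra hwE'
        exact key_lemma V hfin ⟨c, ρ, hρ, hVc⟩ v w hv hwV
          (fun h => hwv (h ▸ rfl)) hvE hwE' hwE
      have hsub2 : {w | w ∈ V ∧ Essential V w} ⊆ V := fun w hw => hw.1
      apply Set.Subset.antisymm
      · exact ballSet_anti hsub2
      · calc ballSet {w | w ∈ V ∧ Essential V w}
            ⊆ ballSet {w | w ∈ V \ {v} ∧ Essential (V \ {v}) w} := ballSet_anti hsub1
          _ = ballSet (V \ {v}) := h2.symm
          _ = ballSet V := h1.symm

/-- If v, v' are both inessential in a finite V with circumradius < 1, then v' is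
inessential in V \ {v}; consequently 𝓑(V) = 𝓑(ess V). -/
theorem inessential_removal (V : Set E3) (hfin : V.Finite)
    (hcr : ∃ (c : E3) (ρ : ℝ), ρ < 1 ∧ V ⊆ Metric.closedBall c ρ) :
    (∀ v v' : E3, v ∈ V → v' ∈ V → v ≠ v' →
      ¬ Essential V v → ¬ Essential V v' → ¬ Essential (V \ {v}) v') ∧
    ballSet V = ballSet {v | v ∈ V ∧ Essential V v} := by
  exact ⟨fun v v' hv hv' hne h1 h2 => key_lemma V hfin hcr v v' hv hv' hne h1 h2,
    ball_eq_ess V.ncard V hfin le_rfl hcr⟩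
end
end

section
/- If V ⊆ ℝ³ is finite with diam V = 1 and a point v ∈ V is at distance 1 from at least two other points of V, then v is essential in V, i.e., there exists a unit ball containing V \ {v} and missing v. -/
open scoped InnerProductSpace
open Metric

noncomputable section

lemma aux_arith (s δ t i α0 : ℝ) (hs3 : 3 ≤ s) (hs4 : s < 4)
    (hδ0 : 0 < δ) (hδ1 : δ ≤ 1) (htδ : δ ≤ t) (ht1 : t ≤ 1)
    (hα0 : α0^2 * s = 1) (hα0l : 1/2 < α0) (hα0u : α0 ≤ 1)
    (hi : i ≤ -(t^2)) :
    t^2 + 2*(α0 + δ^2*(2*α0-1)/12)*i + (α0 + δ^2*(2*α0-1)/12)^2*s ≤ 1 := by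
  set η := δ^2*(2*α0-1)/12 with hη
  have hδsq : 0 < δ^2 := by positivity
  have hη0 : 0 < η := by rw [hη]; nlinarith
  have hηle : η ≤ 1/12 := by rw [hη]; nlinarith
  have hα0s : α0 * s ≤ 2 := by nlinarith [sq_nonneg (α0*s - 2)]
  have h12 : δ^2*(2*α0-1) = 12*η := by rw [hη]; ring
  have hα : 0 < α0 + η := by linarith
  have h2i : 2*(α0+η)*i ≤ -2*(α0+η)*t^2 := by nlinarith
  have key : 0 ≤ (t^2 - δ^2) * (2*(α0+η) - 1) := by
    apply mul_nonneg <;> nlinarith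
  nlinarith [sq_nonneg η, mul_nonneg hη0.le hη0.le]


set_option maxHeartbeats 1000000 in
/-- If V is finite with diam V = 1 and v ∈ V is at distance 1 from at least two other
points of V, then v is essential: some unit ball contains V \ {v} and misses v. -/
theorem essential_of_two_diameters (V : Set E3) (hfin : V.Finite)
    (hdiam : EMetric.diam V = 1) (v p q : E3)
    (hv : v ∈ V) (hp : p ∈ V) (hq : q ∈ V)
    (hpv : p ≠ v) (hqv : q ≠ v) (hpq : p ≠ q)
    (h1 : ‖v - p‖ = 1) (h2 : ‖v - q‖ = 1) :
    ∃ w : E3, 1 < ‖w - v‖ ∧ ∀ u ∈ V \ {v}, ‖w - u‖ ≤ 1 := by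
  -- all pairwise distances in V are ≤ 1
  have hdist : ∀ x ∈ V, ∀ y ∈ V, ‖x - y‖ ≤ 1 := by
    intro x hx y hy
    have h := EMetric.edist_le_diam_of_mem hx hy
    rw [show Metric.ediam V = 1 from hdiam] at h
    have h' : dist x y ≤ 1 := by
      rw [dist_edist]
      calc (edist x y).toReal ≤ (1 : ENNReal).toReal :=
            ENNReal.toReal_mono (by norm_num) h
        _ = 1 := by simp
    rwa [dist_eq_norm] at h'
  set a : E3 := p - v with ha_def
  set b : E3 := q - v with hb_def
  have ha : ‖a‖ = 1 := by rw [ha_def, ← norm_neg]; simpa using h1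
  have hb : ‖b‖ = 1 := by rw [hb_def, ← norm_neg]; simpa using h2
  set c : ℝ := ⟪a, b⟫_ℝ with hc_def
  have hab_sub : ‖a - b‖ ^ 2 = 2 - 2 * c := by
    rw [norm_sub_sq_real, ha, hb]; ring
  have habpq : a - b = p - q := by rw [ha_def, hb_def]; abel
  have hc_lb : 1/2 ≤ c := by
    have hle : ‖a - b‖ ≤ 1 := by rw [habpq]; exact hdist p hp q hq
    nlinarith [norm_nonneg (a - b)]
  have hc_ub : c < 1 := by
    have hne : a - b ≠ 0 := by rw [habpq]; exact sub_ne_zero.mpr hpq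
    have hpos : 0 < ‖a - b‖ := norm_pos_iff.mpr hne
    nlinarith
  set s : ℝ := ‖a + b‖ ^ 2 with hs_def
  have hs : s = 2 + 2 * c := by
    rw [hs_def, norm_add_sq_real, ha, hb]; ring
  have hs3 : 3 ≤ s := by rw [hs]; linarith
  have hs4 : s < 4 := by rw [hs]; linarith
  have hspos : 0 < s := by linarith
  -- minimal distance from v to V \ {v}
  obtain ⟨u₀, hu₀, hmin⟩ := Set.exists_min_image (V \ {v}) (fun u => ‖v - u‖)
    (hfin.diff) ⟨p, hp, hpv⟩
  set δ : ℝ := ‖v - u₀‖ with hδ_def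
  have hδ0 : 0 < δ := by
    rw [hδ_def]
    exact norm_pos_iff.mpr (sub_ne_zero.mpr (Ne.symm hu₀.2))
  have hδ1 : δ ≤ 1 := hdist v hv u₀ hu₀.1
  -- auxiliary facts about √s
  set r : ℝ := Real.sqrt s with hr_def
  have hr : r = ‖a + b‖ := by
    rw [hr_def, hs_def, Real.sqrt_sq (norm_nonneg _)]
  have hr1 : 1 ≤ r := by
    rw [hr_def]
    nlinarith [Real.sq_sqrt hspos.le, Real.sqrt_nonneg s]
  have hr2 : r < 2 := by
    rw [hr_def]
    nlinarith [Real.sq_sqrt hspos.le, Real.sqrt_nonneg s]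
  have hrpos : 0 < r := by linarith
  set α0 : ℝ := r⁻¹ with hα0_def
  have hα0 : α0 ^ 2 * s = 1 := by
    have hr2s : r ^ 2 = s := by rw [hr_def]; exact Real.sq_sqrt hspos.le
    rw [hα0_def, inv_pow, ← hr2s]
    exact inv_mul_cancel₀ (by positivity)
  have hα0l : 1/2 < α0 := by
    rw [hα0_def, inv_eq_one_div]
    rw [div_lt_div_iff₀ (by norm_num) hrpos]
    linarith
  have hα0u : α0 ≤ 1 := by
    rw [hα0_def]
    exact inv_le_one_of_one_le₀ hr1
  set α : ℝ := α0 + δ^2*(2*α0-1)/12 with hα_def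
  have hδsq : 0 < δ^2 := by positivity
  have hηpos : 0 < δ^2*(2*α0-1)/12 := by nlinarith
  have hαpos : 0 < α := by rw [hα_def]; linarith
  refine ⟨v + α • (a + b), ?_, ?_⟩
  · -- 1 < ‖w - v‖
    have hwv : v + α • (a + b) - v = α • (a + b) := by abel
    rw [hwv, norm_smul, Real.norm_eq_abs, abs_of_pos hαpos, ← hr]
    have : α0 * r = 1 := by rw [hα0_def]; field_simp
    have hαgt : α0 < α := by
      rw [hα_def]
      linarith
    nlinarith
  · intro u hu
    set d : E3 := v - u with hd_def
    have ht1 : ‖d‖ ≤ 1 := hdist v hv u hu.1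
    have htδ : δ ≤ ‖d‖ := hmin u hu
    have hwu : v + α • (a + b) - u = d + α • (a + b) := by
      rw [hd_def]; abel
    have hia : ⟪d, a⟫_ℝ ≤ -(‖d‖^2) / 2 := by
      have hda : d + a = p - u := by rw [hd_def, ha_def]; abel
      have hle : ‖d + a‖ ≤ 1 := by rw [hda]; exact hdist p hp u hu.1
      have := norm_add_sq_real d a
      rw [ha] at this
      nlinarith [norm_nonneg (d + a)]
    have hib : ⟪d, b⟫_ℝ ≤ -(‖d‖^2) / 2 := by
      have hdb : d + b = q - u := by rw [hd_def, hb_def]; abel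
      have hle : ‖d + b‖ ≤ 1 := by rw [hdb]; exact hdist q hq u hu.1
      have := norm_add_sq_real d b
      rw [hb] at this
      nlinarith [norm_nonneg (d + b)]
    have hexp : ‖d + α • (a + b)‖ ^ 2
        = ‖d‖^2 + 2*α*(⟪d, a⟫_ℝ + ⟪d, b⟫_ℝ) + α^2 * s := by
      rw [norm_add_sq_real, real_inner_smul_right, inner_add_right,
        norm_smul, Real.norm_eq_abs, mul_pow, sq_abs, hs_def]
      ring
    have hkey := aux_arith s δ ‖d‖ (⟪d, a⟫_ℝ + ⟪d, b⟫_ℝ) α0 hs3 hs4 hδ0 hδ1 htδ ht1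
      hα0 hα0l hα0u (by nlinarith)
    rw [← hα_def] at hkey
    have hsq : ‖d + α • (a + b)‖ ^ 2 ≤ 1 := by rw [hexp]; linarith
    rw [hwu]
    exact (abs_le.mp ((sq_le_one_iff_abs_le_one (a := ‖d + α • (a + b)‖)).mp hsq)).2
end
end
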